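/- Let p ∈ [1,∞), p* = p/(p−1), and let X, X̂ be ℝ^d-valued random variables with densities p_X, p_X̂ ∈ L^{p*}(ℝ^d). Then for every essentially bounded f ∈ W^{1,p}(ℝ^d) and every q ∈ (0,∞), E[|f(X) − f(X̂)|^q] ≤ C · (E[|X − X̂|^q])^{1/(q+1)}, where C = (2K₀)^q + (2‖f‖_∞)^q A_p (‖p_X‖_{L^{p*}} + ‖p_X̂‖_{L^{p*}}) ‖ |Df| ‖_{L^p} and A_p is the constant in the strong (p,p) Hardy–Littlewood maximal inequality (for p = 1, interpret the corresponding term via the weak estimate). -/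

import Mathlib

open MeasureTheory Metric Filter Set
open scoped ENNReal Topology

noncomputable section

abbrev Euc (d : ℕ) := EuclideanSpace ℝ (Fin d)

/-- Hardy--Littlewood maximal function of a measure. -/
def maximal {d : ℕ} (ν : Measure (Euc d)) (x : Euc d) : ℝ≥0∞ :=
  ⨆ (s : ℝ) (_ : 0 < s), ν (closedBall x s) / volume (closedBall x s)

/-- Restricted Hardy--Littlewood maximal function of a measure. -/
def maximalR {d : ℕ} (R : ℝ) (ν : Measure (Euc d)) (x : Euc d) : ℝ≥0∞ :=
  ⨆ (s : ℝ) (_ : s ∈ Set.Ioc 0 R), ν (closedBall x s) / volume (closedBall x s)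

/-- Divergence of a `C¹` vector field on `ℝ^d`. -/
def ediv {d : ℕ} (g : Euc d → Euc d) (x : Euc d) : ℝ :=
  ∑ i : Fin d,
    (inner ℝ (fderiv ℝ g x (EuclideanSpace.single i (1:ℝ))) (EuclideanSpace.single i (1:ℝ)) : ℝ)





lemma vol_cb {d : ℕ} (x : Euc d) {r : ℝ} (hr : 0 ≤ r) :
    volume (closedBall x r)
      = ENNReal.ofReal (r ^ d) * volume (closedBall (0 : Euc d) 1) := by
  rw [Measure.addHaar_closedBall' volume x hr, finrank_euclideanSpace_fin]

lemma le_maximal {d : ℕ} (ν : Measure (Euc d)) (x : Euc d) {s : ℝ} (hs : 0 < s) :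
    ν (closedBall x s) / volume (closedBall x s) ≤ maximal ν x := by
  have := le_iSup (fun t : ℝ => ⨆ (_ : 0 < t), ν (closedBall x t) / volume (closedBall x t)) s
  refine le_trans ?_ this
  exact le_iSup (fun _ : 0 < s => ν (closedBall x s) / volume (closedBall x s)) hs

lemma maximal_lsc {d : ℕ} (ν : Measure (Euc d)) : LowerSemicontinuous (maximal ν) := by
  intro x c hc
  rw [maximal, gt_iff_lt, lt_iSup_iff] at hc
  obtain ⟨s, hc⟩ := hc
  rw [lt_iSup_iff] at hc
  obtain ⟨hs, hcs⟩ := hc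
  set c₀ := volume (closedBall (0 : Euc d) 1) with hc₀
  have hc₀0 : c₀ ≠ 0 := (measure_closedBall_pos volume _ one_pos).ne'
  have hc₀t : c₀ ≠ ∞ := measure_closedBall_lt_top.ne
  -- F t = ν (closedBall x s) / (ofReal (t^d) * c₀)
  set A := ν (closedBall x s) with hA
  have hFs : c < A / (ENNReal.ofReal (s ^ d) * c₀) := by
    rwa [← vol_cb x hs.le]
  have hcont : Tendsto (fun t : ℝ => A / (ENNReal.ofReal (t ^ d) * c₀)) (𝓝 s)
      (𝓝 (A / (ENNReal.ofReal (s ^ d) * c₀))) := by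
    have h1 : Tendsto (fun t : ℝ => ENNReal.ofReal (t ^ d) * c₀) (𝓝 s)
        (𝓝 (ENNReal.ofReal (s ^ d) * c₀)) := by
      have := ((ENNReal.continuous_ofReal.tendsto (s ^ d)).comp ((continuous_pow d).tendsto s))
      exact ENNReal.Tendsto.mul_const this (Or.inr hc₀t)
    exact ENNReal.Tendsto.const_div h1
      (Or.inl (ENNReal.mul_ne_top ENNReal.ofReal_ne_top hc₀t))
  have hev : ∀ᶠ t in 𝓝 s, c < A / (ENNReal.ofReal (t ^ d) * c₀) :=
    hcont.eventually (lt_mem_nhds hFs)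
  rw [Metric.eventually_nhds_iff] at hev
  obtain ⟨δ, hδ, hδ'⟩ := hev
  have hts : dist (s + δ / 2) s < δ := by
    have h2 : s + δ / 2 - s = δ / 2 := by ring
    rw [Real.dist_eq, h2, abs_of_pos (half_pos hδ)]
    linarith
  have hkey := hδ' hts
  set t := s + δ / 2 with htdef
  have ht0 : 0 < t := by positivity
  rw [Metric.eventually_nhds_iff]
  refine ⟨δ / 2, half_pos hδ, fun x' hx' => ?_⟩
  have hsub : closedBall x s ⊆ closedBall x' t := by
    intro y hy
    rw [mem_closedBall] at hy ⊢
    calc dist y x' ≤ dist y x + dist x x' := dist_triangle _ _ _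
    _ ≤ s + δ / 2 := by
        have := hx'
        rw [dist_comm] at this
        exact add_le_add hy this.le
  refine lt_of_lt_of_le hkey (le_trans ?_ (le_maximal ν x' ht0))
  rw [vol_cb x' ht0.le]
  exact ENNReal.div_le_div_right (measure_mono hsub) _

lemma maximal_measurable {d : ℕ} (ν : Measure (Euc d)) : Measurable (maximal ν) :=
  (maximal_lsc ν).measurable


lemma rev_holder {α : Type*} [MeasurableSpace α] {p r : ℝ} (hpr : p.HolderConjugate r)
    (μ : Measure α) (h : α → ℝ≥0∞) :
    ∫⁻ x, h x ∂μ ≤ (∫⁻ x, h x ^ r ∂μ) ^ (1 / r) * (μ univ) ^ (1 / p) := by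
  rw [show (∫⁻ x, h x ∂μ) = lintegral μ h from rfl, lintegral_def]
  refine iSup₂_le fun g hg => ?_
  rw [← SimpleFunc.lintegral_eq_lintegral]
  have h1 := ENNReal.lintegral_mul_le_Lp_mul_Lq μ hpr.symm g.measurable.aemeasurable
      (aemeasurable_const (b := (1 : ℝ≥0∞)))
  simp only [Pi.mul_apply, mul_one, ENNReal.one_rpow, lintegral_one] at h1
  refine h1.trans (mul_le_mul' (ENNReal.rpow_le_rpow
    (lintegral_mono fun x => ENNReal.rpow_le_rpow (hg x) hpr.symm.nonneg)
    hpr.symm.one_div_nonneg) le_rfl)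

lemma density_rpow_le {α : Type*} [MeasurableSpace α] {μ : Measure α} {r : ℝ} (hr : 1 < r)
    {ρ g : α → ℝ≥0∞} (hρ : Measurable ρ)
    (hle : ∀ s, MeasurableSet s → ∫⁻ x in s, ρ x ∂μ ≤ ∫⁻ x in s, g x ∂μ)
    (hfin : ∫⁻ x, g x ∂μ ≠ ∞) :
    ∫⁻ x, ρ x ^ r ∂μ ≤ ∫⁻ x, g x ^ r ∂μ := by
  have hconj : Real.HolderConjugate r (r / (r - 1)) := Real.HolderConjugate.conjExponent hr
  have hρr : Measurable fun x => ρ x ^ r := hρ.pow_const r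
  rw [lintegral_eq_iSup_eapprox_lintegral hρr]
  refine iSup_le fun n => ?_
  set φ := SimpleFunc.eapprox (fun x => ρ x ^ r) n with hφ
  have hφle : ∀ x, φ x ≤ ρ x ^ r := by
    intro x
    rw [← SimpleFunc.iSup_eapprox_apply hρr]
    exact le_iSup (fun n => SimpleFunc.eapprox (fun x => ρ x ^ r) n x) n
  -- each fiber
  have hfiber : ∀ c ∈ φ.range, c * μ (φ ⁻¹' {c}) ≤ ∫⁻ x in φ ⁻¹' {c}, g x ^ r ∂μ := by
    intro c _
    rcases eq_or_ne c 0 with rfl | hc0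
    · simp
    set s := φ ⁻¹' {c} with hs
    have hsm : MeasurableSet s := φ.measurableSet_fiber c
    set V := μ s with hV
    rcases eq_or_ne V 0 with hV0 | hV0
    · rw [← hV] at *
      have : ∫⁻ x in s, ρ x ∂μ ≤ ∫⁻ x in s, g x ∂μ := hle s hsm
      calc c * V = 0 := by rw [hV0, mul_zero]
      _ ≤ _ := zero_le'
    -- ρ ≥ c^(1/r) on s
    have hrne : r ≠ 0 := hconj.ne_zero
    have hlow : ∀ x ∈ s, c ^ (1 / r) ≤ ρ x := by
      intro x hx
      have h1 : c ≤ ρ x ^ r := by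
        have : φ x = c := hx
        rw [← this]; exact hφle x
      have h2 : c ^ (1 / r) ≤ (ρ x ^ r) ^ (1 / r) :=
        ENNReal.rpow_le_rpow h1 (by positivity)
      rwa [← ENNReal.rpow_mul, mul_one_div, div_self hrne, ENNReal.rpow_one] at h2
    have h1 : c ^ (1 / r) * V ≤ ∫⁻ x in s, ρ x ∂μ := by
      rw [← setLIntegral_const s (c ^ (1 / r))]
      exact setLIntegral_mono hρ hlow
    have h2 : c ^ (1 / r) * V ≤ ∫⁻ x in s, g x ∂μ := h1.trans (hle s hsm)
    have hgfin : ∫⁻ x in s, g x ∂μ ≠ ∞ :=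
      (lt_of_le_of_lt (lintegral_mono' Measure.restrict_le_self le_rfl) hfin.lt_top).ne
    have hcr0 : c ^ (1 / r) ≠ 0 := by
      simp only [ne_eq, ENNReal.rpow_eq_zero_iff, not_or, not_and, not_lt]
      constructor
      · intro h; exact absurd h hc0
      · intro _; positivity
    have hVt : V ≠ ∞ := by
      intro hVt
      rw [hVt, ENNReal.mul_top hcr0] at h2
      exact hgfin (top_le_iff.mp h2)
    -- reverse Hölder on s for g
    have h3 : ∫⁻ x in s, g x ∂μ
        ≤ (∫⁻ x in s, g x ^ r ∂μ) ^ (1 / r) * V ^ (1 / (r / (r - 1))) := by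
      have := rev_holder hconj.symm (μ.restrict s) g
      rwa [Measure.restrict_apply_univ] at this
    set G := ∫⁻ x in s, g x ^ r ∂μ with hG
    have h4 : c ^ (1 / r) * V ≤ G ^ (1 / r) * V ^ (1 / (r / (r - 1))) := h2.trans h3
    -- split V = V^(1/r) * V^(1/r')
    have hsum : 1 / r + 1 / (r / (r - 1)) = 1 := by
      rw [one_div, one_div]; exact hconj.inv_add_inv_eq_one
    have hVr' : V ^ (1 / (r / (r - 1))) ≠ 0 := by
      simp only [ne_eq, ENNReal.rpow_eq_zero_iff, not_or, not_and, not_lt]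
      exact ⟨fun h => absurd h hV0, fun h => absurd h hVt⟩
    have hVr't : V ^ (1 / (r / (r - 1))) ≠ ∞ := by
      simp only [ne_eq, ENNReal.rpow_eq_top_iff, not_or, not_and, not_lt]
      exact ⟨fun h => absurd h hV0, fun h => absurd h hVt⟩
    have h5 : c ^ (1 / r) * V ^ (1 / r) ≤ G ^ (1 / r) := by
      rw [← ENNReal.mul_le_mul_iff_left hVr' hVr't, mul_assoc, ← ENNReal.rpow_add _ _ hV0 hVt,
        hsum, ENNReal.rpow_one]
      exact h4
    have h6 : (c * V) ^ (1 / r) ≤ G ^ (1 / r) := by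
      rwa [ENNReal.mul_rpow_of_nonneg _ _ (by positivity)]
    have h7 := ENNReal.rpow_le_rpow h6 hconj.nonneg
    rwa [← ENNReal.rpow_mul, ← ENNReal.rpow_mul, one_div, inv_mul_cancel₀ hrne,
      ENNReal.rpow_one, ENNReal.rpow_one] at h7
  -- sum over fibers
  calc φ.lintegral μ = ∑ c ∈ φ.range, c * μ (φ ⁻¹' {c}) := rfl
  _ ≤ ∑ c ∈ φ.range, ∫⁻ x in φ ⁻¹' {c}, g x ^ r ∂μ := Finset.sum_le_sum hfiber
  _ = ∫⁻ x, g x ^ r ∂(∑ c ∈ φ.range, μ.restrict (φ ⁻¹' {c})) :=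
      (lintegral_finset_sum_measure _ _ _).symm
  _ ≤ ∫⁻ x, g x ^ r ∂μ := by
      refine lintegral_mono' (Measure.le_iff.2 fun t ht => ?_) le_rfl
      rw [Measure.finset_sum_apply]
      have heq : ∀ c ∈ φ.range, μ.restrict (φ ⁻¹' {c}) t = μ (t ∩ φ ⁻¹' {c}) := by
        intro c _
        rw [Measure.restrict_apply ht]
      rw [Finset.sum_congr rfl heq, ← measure_biUnion_finset ?_ ?_]
      · exact measure_mono (iUnion₂_subset fun c _ => inter_subset_left)
      · intro a _ b _ hab
        refine Disjoint.mono inter_subset_right inter_subset_right ?_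
        simp only [disjoint_left]
        intro x hx hx'
        exact hab (hx.symm.trans hx')
      · exact fun c _ => ht.inter (φ.measurableSet_fiber c)



lemma two_point {d : ℕ} {f : Euc d → ℝ} {K₀ : ℝ} (hK₀ : 0 ≤ K₀) {M : Euc d → ℝ≥0∞}
    (hM : Measurable M)
    (hfloc : LocallyIntegrable f (volume : Measure (Euc d)))
    (hMloc : LocallyIntegrable (fun x => (M x).toReal) (volume : Measure (Euc d)))
    (hMae : ∀ᵐ y ∂(volume : Measure (Euc d)), M y ≠ ∞)
    {x₁ x₂ : Euc d} (h1 : M x₁ ≠ ∞) (h2 : M x₂ ≠ ∞)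
    (hs1 : ∀ᵐ y ∂(volume : Measure (Euc d)),
      ENNReal.ofReal |f x₁ - f y| ≤ ENNReal.ofReal (K₀ * dist x₁ y) * (M x₁ + M y))
    (hf2 : Tendsto (fun r : ℝ => ⨍ y in closedBall x₂ r, ‖f y - f x₂‖ ∂volume)
      (𝓝[>] 0) (𝓝 0))
    (hM2 : Tendsto (fun r : ℝ => ⨍ y in closedBall x₂ r, (M y).toReal ∂volume)
      (𝓝[>] 0) (𝓝 ((M x₂).toReal))) :
    ENNReal.ofReal |f x₁ - f x₂| ≤ ENNReal.ofReal (K₀ * dist x₁ x₂) * (M x₁ + M x₂) := by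
  set L := ENNReal.ofReal |f x₁ - f x₂| with hL
  set D₀ := dist x₁ x₂ with hD₀
  -- the bound for a fixed radius r > 0
  have key : ∀ r : ℝ, 0 < r →
      L ≤ ENNReal.ofReal (K₀ * (D₀ + r)) *
            (M x₁ + ENNReal.ofReal (⨍ y in closedBall x₂ r, (M y).toReal ∂volume))
          + ENNReal.ofReal (⨍ y in closedBall x₂ r, ‖f y - f x₂‖ ∂volume) := by
    intro r hr
    set B := closedBall x₂ r with hB
    have hBm : MeasurableSet B := measurableSet_closedBall
    have hV0 : volume B ≠ 0 := (measure_closedBall_pos volume x₂ hr).ne'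
    have hVt : volume B ≠ ∞ := measure_closedBall_lt_top.ne
    set c := ENNReal.ofReal (K₀ * (D₀ + r)) with hc
    have hct : c ≠ ∞ := ENNReal.ofReal_ne_top
    -- integrability of f on B
    have hfint : IntegrableOn (fun y => ‖f y - f x₂‖) B volume := by
      refine (((hfloc.integrableOn_isCompact (isCompact_closedBall x₂ r)).sub
        (integrableOn_const measure_closedBall_lt_top.ne))).norm
    have hMint : IntegrableOn (fun y => (M y).toReal) B volume :=
      hMloc.integrableOn_isCompact (isCompact_closedBall x₂ r)
    -- Step 1 : L * V ≤ ∫_B (c * (M x₁ + M y) + ofReal |f y - f x₂|)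
    have step1 : L * volume B ≤ ∫⁻ y in B,
        (c * (M x₁ + M y) + ENNReal.ofReal ‖f y - f x₂‖) ∂volume := by
      rw [← setLIntegral_const B L]
      refine lintegral_mono_ae ?_
      filter_upwards [ae_restrict_of_ae hs1, ae_restrict_mem hBm] with y hQ hyB
      have htri : |f x₁ - f x₂| ≤ |f x₁ - f y| + |f y - f x₂| := by
        have : f x₁ - f x₂ = (f x₁ - f y) + (f y - f x₂) := by ring
        rw [this]; exact abs_add_le _ _
      calc L ≤ ENNReal.ofReal (|f x₁ - f y| + |f y - f x₂|) := ENNReal.ofReal_le_ofReal htri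
      _ = ENNReal.ofReal |f x₁ - f y| + ENNReal.ofReal |f y - f x₂| :=
          ENNReal.ofReal_add (abs_nonneg _) (abs_nonneg _)
      _ ≤ c * (M x₁ + M y) + ENNReal.ofReal ‖f y - f x₂‖ := by
          rw [Real.norm_eq_abs]
          refine add_le_add (hQ.trans ?_) le_rfl
          refine mul_le_mul' (ENNReal.ofReal_le_ofReal ?_) le_rfl
          refine mul_le_mul_of_nonneg_left ?_ hK₀
          calc dist x₁ y ≤ dist x₁ x₂ + dist x₂ y := dist_triangle _ _ _
          _ ≤ D₀ + r := add_le_add le_rfl (mem_closedBall'.mp hyB)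
    -- Step 2 : compute the RHS integral
    have step2 : ∫⁻ y in B, (c * (M x₁ + M y) + ENNReal.ofReal ‖f y - f x₂‖) ∂volume
        = c * M x₁ * volume B + c * ∫⁻ y in B, M y ∂volume
          + ∫⁻ y in B, ENNReal.ofReal ‖f y - f x₂‖ ∂volume := by
      rw [lintegral_add_left (f := fun y => c * (M x₁ + M y)) (((measurable_const.add hM).const_mul c))]
      congr 1
      rw [lintegral_const_mul' c _ hct, lintegral_add_left measurable_const,
        setLIntegral_const, mul_add, ← mul_assoc]
    -- convert the two integrals to averages
    have hMconv : ∫⁻ y in B, M y ∂volume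
        = ENNReal.ofReal (∫ y in B, (M y).toReal ∂volume) := by
      rw [ofReal_integral_eq_lintegral_ofReal hMint
        (ae_restrict_of_ae (Eventually.of_forall fun y => ENNReal.toReal_nonneg))]
      refine lintegral_congr_ae ?_
      filter_upwards [ae_restrict_of_ae hMae] with y hy
      rw [ENNReal.ofReal_toReal hy]
    have hfconv : ∫⁻ y in B, ENNReal.ofReal ‖f y - f x₂‖ ∂volume
        = ENNReal.ofReal (∫ y in B, ‖f y - f x₂‖ ∂volume) :=
      (ofReal_integral_eq_lintegral_ofReal hfint
        (ae_restrict_of_ae (Eventually.of_forall fun y => norm_nonneg _))).symm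
    -- divide by V
    have hdiv : ∀ a : ℝ, ENNReal.ofReal a / volume B
        = ENNReal.ofReal (a / (volume B).toReal) := by
      intro a
      rw [ENNReal.ofReal_div_of_pos (ENNReal.toReal_pos hV0 hVt),
        ENNReal.ofReal_toReal hVt]
    have havg : ∀ g : Euc d → ℝ, ENNReal.ofReal (∫ y in B, g y ∂volume) / volume B
        = ENNReal.ofReal (⨍ y in B, g y ∂volume) := by
      intro g
      rw [hdiv, setAverage_eq, smul_eq_mul, div_eq_inv_mul]
      rfl
    calc L = L * volume B / volume B := by
          rw [mul_div_assoc, ENNReal.div_self hV0 hVt, mul_one]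
    _ ≤ (c * M x₁ * volume B + c * ∫⁻ y in B, M y ∂volume
          + ∫⁻ y in B, ENNReal.ofReal ‖f y - f x₂‖ ∂volume) / volume B :=
        ENNReal.div_le_div_right (step1.trans (le_of_eq step2)) (volume B)
    _ = c * M x₁ + c * (ENNReal.ofReal (⨍ y in B, (M y).toReal ∂volume))
          + ENNReal.ofReal (⨍ y in B, ‖f y - f x₂‖ ∂volume) := by
        rw [ENNReal.add_div, ENNReal.add_div]
        congr 1
        · congr 1
          · rw [mul_div_assoc, ENNReal.div_self hV0 hVt, mul_one]
          · rw [mul_div_assoc, hMconv, havg]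
        · rw [hfconv, havg]
    _ = c * (M x₁ + ENNReal.ofReal (⨍ y in B, (M y).toReal ∂volume))
          + ENNReal.ofReal (⨍ y in B, ‖f y - f x₂‖ ∂volume) := by
        rw [mul_add]
  -- now take the limit r → 0⁺
  have hlim : Tendsto (fun r : ℝ =>
      ENNReal.ofReal (K₀ * (D₀ + r)) *
        (M x₁ + ENNReal.ofReal (⨍ y in closedBall x₂ r, (M y).toReal ∂volume))
      + ENNReal.ofReal (⨍ y in closedBall x₂ r, ‖f y - f x₂‖ ∂volume))
      (𝓝[>] 0) (𝓝 (ENNReal.ofReal (K₀ * D₀) * (M x₁ + M x₂))) := by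
    have hc : Tendsto (fun r : ℝ => ENNReal.ofReal (K₀ * (D₀ + r))) (𝓝[>] 0)
        (𝓝 (ENNReal.ofReal (K₀ * D₀))) := by
      refine (ENNReal.continuous_ofReal.tendsto _).comp ?_
      have : Tendsto (fun r : ℝ => K₀ * (D₀ + r)) (𝓝 0) (𝓝 (K₀ * (D₀ + 0))) := by
        exact (tendsto_const_nhds.add tendsto_id).const_mul K₀
      rw [add_zero] at this
      exact this.mono_left nhdsWithin_le_nhds
    have hMavg : Tendsto (fun r : ℝ =>
        M x₁ + ENNReal.ofReal (⨍ y in closedBall x₂ r, (M y).toReal ∂volume)) (𝓝[>] 0)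
        (𝓝 (M x₁ + M x₂)) := by
      have := (ENNReal.continuous_ofReal.tendsto _).comp hM2
      rw [ENNReal.ofReal_toReal h2] at this
      exact tendsto_const_nhds.add this
    have hprod := ENNReal.Tendsto.mul hc (Or.inr (ENNReal.add_ne_top.2 ⟨h1, h2⟩))
      hMavg (Or.inr ENNReal.ofReal_ne_top)
    have hzero : Tendsto (fun r : ℝ =>
        ENNReal.ofReal (⨍ y in closedBall x₂ r, ‖f y - f x₂‖ ∂volume)) (𝓝[>] 0)
        (𝓝 0) := by
      have := (ENNReal.continuous_ofReal.tendsto 0).comp hf2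
      rwa [ENNReal.ofReal_zero] at this
    have := hprod.add hzero
    rwa [add_zero] at this
  refine ge_of_tendsto hlim ?_
  filter_upwards [self_mem_nhdsWithin] with r hr
  exact key r hr


lemma withDensity_ac {d : ℕ} (pY : Euc d → ℝ≥0∞) :
    (volume : Measure (Euc d)).withDensity pY ≪ volume := by
  refine Measure.AbsolutelyContinuous.mk fun s hs h0 => ?_
  rw [withDensity_apply _ hs, setLIntegral_measure_zero _ _ h0]

lemma transport {d : ℕ} {Ω : Type*} [MeasurableSpace Ω] {P : Measure Ω} {Y : Ω → Euc d}
    (hY : Measurable Y) {pY : Euc d → ℝ≥0∞}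
    (hdY : P.map Y = (volume : Measure (Euc d)).withDensity pY)
    {Q : Euc d → Prop} (hQ : ∀ᵐ x ∂(volume : Measure (Euc d)), Q x) :
    ∀ᵐ ω ∂P, Q (Y ω) := by
  set N := toMeasurable (volume : Measure (Euc d)) {x | ¬ Q x} with hN
  have hNnull : volume N = 0 := by
    rw [measure_toMeasurable]
    exact hQ
  have hNm : MeasurableSet N := measurableSet_toMeasurable _ _
  have hP : P (Y ⁻¹' N) = 0 := by
    rw [← Measure.map_apply hY hNm, hdY, withDensity_apply _ hNm,
      setLIntegral_measure_zero _ _ hNnull]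
  refine ae_iff.2 (measure_mono_null (fun ω hω => ?_) hP)
  exact subset_toMeasurable _ _ hω

lemma tail_bound {d : ℕ} {Ω : Type*} [MeasurableSpace Ω] (P : Measure Ω)
    [IsProbabilityMeasure P] {Y : Ω → Euc d} (hY : Measurable Y) {pY : Euc d → ℝ≥0∞}
    (hdY : P.map Y = (volume : Measure (Euc d)).withDensity pY)
    {M : Euc d → ℝ≥0∞} (hM : Measurable M) {p r : ℝ} (hconj : p.HolderConjugate r)
    {Λ : ℝ≥0∞} (hΛ0 : Λ ≠ 0) (hΛt : Λ ≠ ∞) :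
    P {ω | Λ < M (Y ω)}
      ≤ Λ⁻¹ * ((∫⁻ x, M x ^ p ∂volume) ^ (1 / p) * (∫⁻ x, pY x ^ r ∂volume) ^ (1 / r)) := by
  set μY := P.map Y with hμY
  haveI : IsProbabilityMeasure μY := Measure.isProbabilityMeasure_map hY.aemeasurable
  have hac : μY ≪ volume := hdY ▸ withDensity_ac pY
  set ρ := μY.rnDeriv volume with hρdef
  have hρ : Measurable ρ := Measure.measurable_rnDeriv _ _
  have hSm : MeasurableSet {x | Λ < M x} := measurableSet_lt measurable_const hM
  have hfinY : ∫⁻ x, pY x ∂(volume : Measure (Euc d)) ≠ ∞ := by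
    have : (volume : Measure (Euc d)).withDensity pY univ = 1 := by
      rw [← hdY]; exact measure_univ
    rw [withDensity_apply _ MeasurableSet.univ, setLIntegral_univ] at this
    rw [this]; exact ENNReal.one_ne_top
  have hle : ∀ s : Set (Euc d), MeasurableSet s →
      ∫⁻ x in s, ρ x ∂volume ≤ ∫⁻ x in s, pY x ∂volume := by
    intro s hs
    calc ∫⁻ x in s, ρ x ∂volume ≤ μY s := Measure.setLIntegral_rnDeriv_le s
    _ = ∫⁻ x in s, pY x ∂volume := by rw [hdY, withDensity_apply _ hs]
  calc P {ω | Λ < M (Y ω)} = μY {x | Λ < M x} := by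
        rw [hμY, Measure.map_apply hY hSm]; rfl
  _ = ∫⁻ x in {x | Λ < M x}, ρ x ∂volume := (Measure.setLIntegral_rnDeriv hac _).symm
  _ ≤ ∫⁻ x in {x | Λ < M x}, Λ⁻¹ * (M x * ρ x) ∂volume := by
      refine setLIntegral_mono ((hM.mul hρ).const_mul _) fun x hx => ?_
      have h1 : (1 : ℝ≥0∞) ≤ Λ⁻¹ * M x := by
        rw [← ENNReal.inv_mul_cancel hΛ0 hΛt]
        exact mul_le_mul' le_rfl (le_of_lt hx)
      calc ρ x = 1 * ρ x := (one_mul _).symm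
      _ ≤ Λ⁻¹ * M x * ρ x := mul_le_mul' h1 le_rfl
      _ = Λ⁻¹ * (M x * ρ x) := mul_assoc _ _ _
  _ ≤ ∫⁻ x, Λ⁻¹ * (M x * ρ x) ∂volume := lintegral_mono' Measure.restrict_le_self le_rfl
  _ = Λ⁻¹ * ∫⁻ x, M x * ρ x ∂volume := lintegral_const_mul' _ _ (ENNReal.inv_ne_top.2 hΛ0)
  _ ≤ Λ⁻¹ * ((∫⁻ x, M x ^ p ∂volume) ^ (1 / p) * (∫⁻ x, ρ x ^ r ∂volume) ^ (1 / r)) := by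
      refine mul_le_mul' le_rfl ?_
      exact ENNReal.lintegral_mul_le_Lp_mul_Lq volume hconj hM.aemeasurable hρ.aemeasurable
  _ ≤ _ := by
      refine mul_le_mul' le_rfl (mul_le_mul' le_rfl ?_)
      refine ENNReal.rpow_le_rpow ?_ hconj.symm.one_div_nonneg
      exact density_rpow_le hconj.symm.lt hρ hle hfinY

/-- Corollary 2.19 (case of `L^{p*}` densities, `r = ∞`): Avikainen-type estimate for
essentially bounded Sobolev functions `f ∈ W^{1,p}(ℝ^d)`, `1 < p < ∞`, with densities
`p_X, p_X̂ ∈ L^{p*}`, `p* = p/(p−1)`.  `Df` is the weak gradient of `f`, `K₀` the constant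
of the pointwise maximal estimate and `A_p` the constant of the strong `(p,p)`
Hardy–Littlewood maximal inequality. -/
theorem stmt_11 {d : ℕ} {Ω : Type*} [MeasurableSpace Ω] (P : Measure Ω) [IsProbabilityMeasure P]
    (X Xh : Ω → Euc d) (hX : Measurable X) (hXh : Measurable Xh)
    (pX pXh : Euc d → ℝ≥0∞)
    (hdX : P.map X = volume.withDensity pX)
    (hdXh : P.map Xh = volume.withDensity pXh)
    (p q K₀ Ap : ℝ) (hp : 1 < p) (hq : 0 < q) (hK₀ : 0 < K₀) (hAp : 0 < Ap)
    (hLpX : ∫⁻ x, pX x ^ (p / (p - 1)) ∂volume ≠ ∞)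
    (hLpXh : ∫⁻ x, pXh x ^ (p / (p - 1)) ∂volume ≠ ∞)
    (f : Euc d → ℝ) (Df : Euc d → Euc d)
    (hgrad : ∀ g : Euc d → Euc d, ContDiff ℝ 1 g → HasCompactSupport g →
      ∫ x, f x * ediv g x = - ∫ x, (inner ℝ (Df x) (g x) : ℝ))
    (hfLp : MemLp f (ENNReal.ofReal p) volume)
    (hDfLp : ∫⁻ x, (‖Df x‖₊ : ℝ≥0∞) ^ p ∂volume ≠ ∞)
    (hfb : eLpNorm f ⊤ volume ≠ ∞)
    (hpt : ∀ᵐ x ∂(volume : Measure (Euc d)), ∀ᵐ y ∂(volume : Measure (Euc d)),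
      ENNReal.ofReal |f x - f y|
        ≤ ENNReal.ofReal (K₀ * dist x y)
          * (maximal (volume.withDensity fun z => (‖Df z‖₊ : ℝ≥0∞)) x
            + maximal (volume.withDensity fun z => (‖Df z‖₊ : ℝ≥0∞)) y))
    (hstrong : (∫⁻ x, maximal (volume.withDensity fun z => (‖Df z‖₊ : ℝ≥0∞)) x ^ p ∂volume) ^ (1 / p)
        ≤ ENNReal.ofReal Ap * (∫⁻ x, (‖Df x‖₊ : ℝ≥0∞) ^ p ∂volume) ^ (1 / p)) :
    ∫⁻ ω, ENNReal.ofReal |f (X ω) - f (Xh ω)| ^ q ∂P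
      ≤ (ENNReal.ofReal ((2 * K₀) ^ q)
          + ENNReal.ofReal ((2 * (eLpNorm f ⊤ volume).toReal) ^ q) * ENNReal.ofReal Ap
            * ((∫⁻ x, pX x ^ (p / (p - 1)) ∂volume) ^ ((p - 1) / p)
              + (∫⁻ x, pXh x ^ (p / (p - 1)) ∂volume) ^ ((p - 1) / p))
            * (∫⁻ x, (‖Df x‖₊ : ℝ≥0∞) ^ p ∂volume) ^ (1 / p))
        * (∫⁻ ω, edist (X ω) (Xh ω) ^ q ∂P) ^ (1 / (q + 1)) := by
  classical
  have hp0 : 0 < p := lt_trans one_pos hp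
  set S := eLpNorm f ⊤ volume with hS
  set ν := (volume : Measure (Euc d)).withDensity (fun z => (‖Df z‖₊ : ℝ≥0∞)) with hν
  set M := maximal ν with hMdef
  have hM : Measurable M := maximal_measurable ν
  set r := p / (p - 1) with hrdef
  have hconj : p.HolderConjugate r := Real.HolderConjugate.conjExponent hp
  have hrinv : (p - 1) / p = 1 / r := (one_div_div p (p - 1)).symm
  set D := ∫⁻ x, ((‖Df x‖₊ : ℝ≥0∞)) ^ p ∂volume with hD
  set IX := ∫⁻ x, pX x ^ r ∂volume with hIX
  set IXh := ∫⁻ x, pXh x ^ r ∂volume with hIXh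
  set ε := ∫⁻ ω, edist (X ω) (Xh ω) ^ q ∂P with hε
  set C₁ := ENNReal.ofReal ((2 * K₀) ^ q) with hC₁
  set C₂ := ENNReal.ofReal ((2 * S.toReal) ^ q) with hC₂
  rw [hrinv]
  -- the strong bound gives finiteness of ∫ M^p
  have hMp_fin : ∫⁻ x, M x ^ p ∂volume ≠ ∞ := by
    intro htop
    have h1 : ((∫⁻ x, M x ^ p ∂volume) ^ (1 / p) : ℝ≥0∞) = ⊤ := by
      rw [htop]; exact ENNReal.top_rpow_of_pos (by positivity)
    have h2 : (ENNReal.ofReal Ap * D ^ (1 / p) : ℝ≥0∞) ≠ ⊤ :=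
      ENNReal.mul_ne_top ENNReal.ofReal_ne_top
        (ENNReal.rpow_ne_top_of_nonneg (by positivity) hDfLp)
    exact h2 (top_le_iff.mp (h1 ▸ hstrong))
  have hMae_fin : ∀ᵐ x ∂(volume : Measure (Euc d)), M x ≠ ⊤ := by
    filter_upwards [ae_lt_top (hM.pow_const p) hMp_fin] with x hx
    intro hM_top
    rw [hM_top, ENNReal.top_rpow_of_pos hp0] at hx
    exact absurd hx (lt_irrefl _)
  -- local integrability of f and of the maximal function
  have h1lep : (1 : ℝ≥0∞) ≤ ENNReal.ofReal p := by
    rw [← ENNReal.ofReal_one]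
    exact ENNReal.ofReal_le_ofReal hp.le
  have hfloc : LocallyIntegrable f (volume : Measure (Euc d)) := hfLp.locallyIntegrable h1lep
  have hMrmem : MemLp (fun x => (M x).toReal) (ENNReal.ofReal p) (volume : Measure (Euc d)) := by
    refine ⟨hM.ennreal_toReal.aestronglyMeasurable, ?_⟩
    rw [eLpNorm_eq_lintegral_rpow_enorm_toReal (by simp [hp0]) ENNReal.ofReal_ne_top,
      ENNReal.toReal_ofReal hp0.le]
    refine ENNReal.rpow_lt_top_of_nonneg (by positivity) ?_
    have hle : ∫⁻ x, ((‖(M x).toReal‖₊ : ℝ≥0∞)) ^ p ∂volume ≤ ∫⁻ x, M x ^ p ∂volume := by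
      refine lintegral_mono fun x => ?_
      refine ENNReal.rpow_le_rpow ?_ hp0.le
      rw [← enorm_eq_nnnorm, Real.enorm_eq_ofReal ENNReal.toReal_nonneg]
      exact ENNReal.ofReal_toReal_le
    exact (lt_of_le_of_lt hle hMp_fin.lt_top).ne
  have hMrloc : LocallyIntegrable (fun x => (M x).toReal) (volume : Measure (Euc d)) :=
    hMrmem.locallyIntegrable h1lep
  -- Lebesgue points
  have hLebf : ∀ᵐ x ∂(volume : Measure (Euc d)),
      Tendsto (fun rr : ℝ => ⨍ y in closedBall x rr, ‖f y - f x‖ ∂volume) (𝓝[>] 0) (𝓝 0) := by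
    filter_upwards [IsUnifLocDoublingMeasure.ae_tendsto_average_norm_sub
      (volume : Measure (Euc d)) hfloc 1] with x hx
    have hmem : ∀ᶠ rr : ℝ in 𝓝[>] 0, x ∈ closedBall x (1 * rr) := by
      filter_upwards [self_mem_nhdsWithin] with rr hrr
      rw [one_mul]
      exact mem_closedBall_self (le_of_lt hrr)
    exact hx (fun _ : ℝ => x) id tendsto_id hmem
  have hLebM : ∀ᵐ x ∂(volume : Measure (Euc d)),
      Tendsto (fun rr : ℝ => ⨍ y in closedBall x rr, (M y).toReal ∂volume) (𝓝[>] 0)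
        (𝓝 ((M x).toReal)) := by
    filter_upwards [IsUnifLocDoublingMeasure.ae_tendsto_average
      (volume : Measure (Euc d)) hMrloc 1] with x hx
    have hmem : ∀ᶠ rr : ℝ in 𝓝[>] 0, x ∈ closedBall x (1 * rr) := by
      filter_upwards [self_mem_nhdsWithin] with rr hrr
      rw [one_mul]
      exact mem_closedBall_self (le_of_lt hrr)
    exact hx (fun _ : ℝ => x) id tendsto_id hmem
  -- the good set
  have hGoodae : ∀ᵐ x ∂(volume : Measure (Euc d)),
      M x ≠ ⊤ ∧
      (∀ᵐ y ∂(volume : Measure (Euc d)),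
        ENNReal.ofReal |f x - f y| ≤ ENNReal.ofReal (K₀ * dist x y) * (M x + M y)) ∧
      Tendsto (fun rr : ℝ => ⨍ y in closedBall x rr, ‖f y - f x‖ ∂volume) (𝓝[>] 0) (𝓝 0) ∧
      Tendsto (fun rr : ℝ => ⨍ y in closedBall x rr, (M y).toReal ∂volume) (𝓝[>] 0)
        (𝓝 ((M x).toReal)) := by
    filter_upwards [hMae_fin, hpt, hLebf, hLebM] with x h1 h2 h3 h4
    exact ⟨h1, h2, h3, h4⟩
  have hGX := transport hX hdX hGoodae
  have hGXh := transport hXh hdXh hGoodae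
  -- key pointwise estimate
  have hkey : ∀ᵐ ω ∂P, ENNReal.ofReal |f (X ω) - f (Xh ω)|
      ≤ ENNReal.ofReal (K₀ * dist (X ω) (Xh ω)) * (M (X ω) + M (Xh ω)) := by
    filter_upwards [hGX, hGXh] with ω h1 h2
    exact two_point hK₀.le hM hfloc hMrloc hMae_fin h1.1 h2.1 h1.2.1 h2.2.2.1 h2.2.2.2
  -- essential boundedness
  have hfS : ∀ᵐ x ∂(volume : Measure (Euc d)), ENNReal.ofReal |f x| ≤ S := by
    have h := ae_le_eLpNormEssSup (f := f) (μ := (volume : Measure (Euc d)))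
    filter_upwards [h] with x hx
    rw [hS, eLpNorm_exponent_top, ← Real.enorm_eq_ofReal (abs_nonneg (f x))]
    simpa using hx
  have hbdd : ∀ᵐ ω ∂P, ENNReal.ofReal |f (X ω) - f (Xh ω)| ≤ 2 * S := by
    filter_upwards [transport hX hdX hfS, transport hXh hdXh hfS] with ω h1 h2
    calc ENNReal.ofReal |f (X ω) - f (Xh ω)|
        ≤ ENNReal.ofReal (|f (X ω)| + |f (Xh ω)|) :=
          ENNReal.ofReal_le_ofReal (abs_sub _ _)
    _ = ENNReal.ofReal |f (X ω)| + ENNReal.ofReal |f (Xh ω)| :=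
          ENNReal.ofReal_add (abs_nonneg _) (abs_nonneg _)
    _ ≤ S + S := add_le_add h1 h2
    _ = 2 * S := (two_mul S).symm
  -- case ε = 0
  rcases eq_or_ne ε 0 with hε0 | hε0
  · have hmeas : Measurable fun ω => edist (X ω) (Xh ω) ^ q := (hX.edist hXh).pow_const q
    have hae0 : ∀ᵐ ω ∂P, edist (X ω) (Xh ω) ^ q = 0 := (lintegral_eq_zero_iff hmeas).mp hε0
    have hLHS : ∫⁻ ω, ENNReal.ofReal |f (X ω) - f (Xh ω)| ^ q ∂P = 0 := by
      rw [← lintegral_zero (μ := P)]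
      refine lintegral_congr_ae ?_
      filter_upwards [hae0] with ω hω
      have hxy : X ω = Xh ω := by
        rw [ENNReal.rpow_eq_zero_iff] at hω
        rcases hω with ⟨h, _⟩ | ⟨_, h⟩
        · exact edist_eq_zero.mp h
        · exact absurd h (not_lt.2 hq.le)
      rw [hxy, sub_self, abs_zero, ENNReal.ofReal_zero, ENNReal.zero_rpow_of_pos hq]
    rw [hLHS]
    exact zero_le'
  rcases eq_or_ne ε ⊤ with hεt | hεt
  · -- ε = ⊤ : right-hand side is ⊤
    have hCpos : (0 : ℝ≥0∞) < C₁ := by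
      rw [hC₁]
      exact ENNReal.ofReal_pos.2 (by positivity)
    have hC0 : C₁ + C₂ * ENNReal.ofReal Ap * (IX ^ (1 / r) + IXh ^ (1 / r)) * D ^ (1 / p) ≠ 0 :=
      (lt_of_lt_of_le hCpos le_self_add).ne'
    rw [hεt, ENNReal.top_rpow_of_pos (by positivity), ENNReal.mul_top hC0]
    exact le_top
  -- main case : 0 < ε < ⊤
  set Λ := ε ^ (-(1 / (q + 1))) with hΛ
  have hΛ0 : Λ ≠ 0 := by
    rw [hΛ]
    simp [ENNReal.rpow_eq_zero_iff, hε0, hεt]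
  have hΛt : Λ ≠ ⊤ := by
    rw [hΛ]
    simp [ENNReal.rpow_eq_top_iff, hε0, hεt]
  have hεinv : Λ⁻¹ = ε ^ (1 / (q + 1)) := by
    rw [hΛ, ENNReal.rpow_neg, inv_inv]
  have hΛqε : Λ ^ q * ε = ε ^ (1 / (q + 1)) := by
    have harith : (-(1 / (q + 1))) * q + 1 = 1 / (q + 1) := by
      have hq1 : q + 1 ≠ 0 := by positivity
      field_simp
      ring
    calc Λ ^ q * ε = ε ^ ((-(1 / (q + 1))) * q) * ε ^ (1 : ℝ) := by
          rw [ENNReal.rpow_mul, ENNReal.rpow_one]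
    _ = ε ^ ((-(1 / (q + 1))) * q + 1) := (ENNReal.rpow_add _ _ hε0 hεt).symm
    _ = ε ^ (1 / (q + 1)) := by rw [harith]
  -- good event
  set G := {ω | M (X ω) ≤ Λ ∧ M (Xh ω) ≤ Λ} with hG
  have hGm : MeasurableSet G := by
    have hGeq : G = (fun ω => M (X ω)) ⁻¹' (Iic Λ) ∩ (fun ω => M (Xh ω)) ⁻¹' (Iic Λ) := rfl
    rw [hGeq]
    exact ((hM.comp hX) measurableSet_Iic).inter ((hM.comp hXh) measurableSet_Iic)
  have hsplit := (lintegral_add_compl (fun ω => ENNReal.ofReal |f (X ω) - f (Xh ω)| ^ q) hGm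
    (μ := P)).symm
  -- bound on the good event
  have bound1 : ∫⁻ ω in G, ENNReal.ofReal |f (X ω) - f (Xh ω)| ^ q ∂P ≤ C₁ * Λ ^ q * ε := by
    have hptw : ∀ᵐ ω ∂(P.restrict G), ENNReal.ofReal |f (X ω) - f (Xh ω)| ^ q
        ≤ (C₁ * Λ ^ q) * edist (X ω) (Xh ω) ^ q := by
      filter_upwards [ae_restrict_of_ae hkey, ae_restrict_mem hGm] with ω hQ hωG
      have step : ENNReal.ofReal (K₀ * dist (X ω) (Xh ω)) * (M (X ω) + M (Xh ω))
          ≤ (ENNReal.ofReal (2 * K₀) * Λ) * edist (X ω) (Xh ω) := by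
        rw [ENNReal.ofReal_mul hK₀.le, ← edist_dist]
        calc ENNReal.ofReal K₀ * edist (X ω) (Xh ω) * (M (X ω) + M (Xh ω))
            ≤ ENNReal.ofReal K₀ * edist (X ω) (Xh ω) * (Λ + Λ) :=
              mul_le_mul' le_rfl (add_le_add hωG.1 hωG.2)
        _ = (ENNReal.ofReal (2 * K₀) * Λ) * edist (X ω) (Xh ω) := by
              rw [ENNReal.ofReal_mul (by norm_num : (0:ℝ) ≤ 2), ENNReal.ofReal_ofNat, two_mul]
              ring
      calc ENNReal.ofReal |f (X ω) - f (Xh ω)| ^ q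
          ≤ (ENNReal.ofReal (K₀ * dist (X ω) (Xh ω)) * (M (X ω) + M (Xh ω))) ^ q :=
            ENNReal.rpow_le_rpow hQ hq.le
      _ ≤ ((ENNReal.ofReal (2 * K₀) * Λ) * edist (X ω) (Xh ω)) ^ q :=
            ENNReal.rpow_le_rpow step hq.le
      _ = (C₁ * Λ ^ q) * edist (X ω) (Xh ω) ^ q := by
            rw [ENNReal.mul_rpow_of_nonneg _ _ hq.le, ENNReal.mul_rpow_of_nonneg _ _ hq.le,
              hC₁, ENNReal.ofReal_rpow_of_nonneg (by positivity) hq.le]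
    have hconst_ne : (C₁ * Λ ^ q : ℝ≥0∞) ≠ ⊤ :=
      ENNReal.mul_ne_top ENNReal.ofReal_ne_top (ENNReal.rpow_ne_top_of_nonneg hq.le hΛt)
    calc ∫⁻ ω in G, ENNReal.ofReal |f (X ω) - f (Xh ω)| ^ q ∂P
        ≤ ∫⁻ ω in G, (C₁ * Λ ^ q) * edist (X ω) (Xh ω) ^ q ∂P := lintegral_mono_ae hptw
    _ ≤ ∫⁻ ω, (C₁ * Λ ^ q) * edist (X ω) (Xh ω) ^ q ∂P :=
          lintegral_mono' Measure.restrict_le_self le_rfl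
    _ = (C₁ * Λ ^ q) * ε := lintegral_const_mul' _ _ hconst_ne
    _ = C₁ * Λ ^ q * ε := by ring
  -- bound on the bad event
  have bound2 : ∫⁻ ω in Gᶜ, ENNReal.ofReal |f (X ω) - f (Xh ω)| ^ q ∂P
      ≤ C₂ * (P {ω | Λ < M (X ω)} + P {ω | Λ < M (Xh ω)}) := by
    have h2S : ((2 : ℝ≥0∞) * S) ^ q = C₂ := by
      rw [hC₂, ← ENNReal.ofReal_rpow_of_nonneg (by positivity) hq.le,
        ENNReal.ofReal_mul (by norm_num : (0:ℝ) ≤ 2), ENNReal.ofReal_ofNat,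
        ENNReal.ofReal_toReal hfb]
    have hptw : ∀ᵐ ω ∂(P.restrict Gᶜ), ENNReal.ofReal |f (X ω) - f (Xh ω)| ^ q ≤ C₂ := by
      filter_upwards [ae_restrict_of_ae hbdd] with ω hω
      rw [← h2S]
      exact ENNReal.rpow_le_rpow hω hq.le
    have hsub : Gᶜ ⊆ {ω | Λ < M (X ω)} ∪ {ω | Λ < M (Xh ω)} := by
      intro ω hω
      rw [hG] at hω
      simp only [mem_compl_iff, mem_setOf_eq, not_and_or, not_le] at hω
      rcases hω with h | h
      · exact Or.inl h
      · exact Or.inr h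
    calc ∫⁻ ω in Gᶜ, ENNReal.ofReal |f (X ω) - f (Xh ω)| ^ q ∂P
        ≤ ∫⁻ _ in Gᶜ, C₂ ∂P := lintegral_mono_ae hptw
    _ = C₂ * P Gᶜ := setLIntegral_const _ _
    _ ≤ C₂ * (P {ω | Λ < M (X ω)} + P {ω | Λ < M (Xh ω)}) := by
        refine mul_le_mul' le_rfl ?_
        exact (measure_mono hsub).trans (measure_union_le _ _)
  -- tail bounds
  have tailX := tail_bound P hX hdX hM hconj hΛ0 hΛt
  have tailXh := tail_bound P hXh hdXh hM hconj hΛ0 hΛt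
  have hMD : (∫⁻ x, M x ^ p ∂volume) ^ (1 / p) ≤ ENNReal.ofReal Ap * D ^ (1 / p) := hstrong
  have tailX' : P {ω | Λ < M (X ω)}
      ≤ Λ⁻¹ * ((ENNReal.ofReal Ap * D ^ (1 / p)) * IX ^ (1 / r)) :=
    tailX.trans (mul_le_mul' le_rfl (mul_le_mul' hMD le_rfl))
  have tailXh' : P {ω | Λ < M (Xh ω)}
      ≤ Λ⁻¹ * ((ENNReal.ofReal Ap * D ^ (1 / p)) * IXh ^ (1 / r)) :=
    tailXh.trans (mul_le_mul' le_rfl (mul_le_mul' hMD le_rfl))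
  -- put everything together
  calc ∫⁻ ω, ENNReal.ofReal |f (X ω) - f (Xh ω)| ^ q ∂P
      = ∫⁻ ω in G, ENNReal.ofReal |f (X ω) - f (Xh ω)| ^ q ∂P
        + ∫⁻ ω in Gᶜ, ENNReal.ofReal |f (X ω) - f (Xh ω)| ^ q ∂P := hsplit
  _ ≤ C₁ * Λ ^ q * ε
      + C₂ * (Λ⁻¹ * ((ENNReal.ofReal Ap * D ^ (1 / p)) * IX ^ (1 / r))
        + Λ⁻¹ * ((ENNReal.ofReal Ap * D ^ (1 / p)) * IXh ^ (1 / r))) := by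
      refine add_le_add bound1 (bound2.trans ?_)
      exact mul_le_mul' le_rfl (add_le_add tailX' tailXh')
  _ = C₁ * (Λ ^ q * ε)
      + C₂ * ENNReal.ofReal Ap * (IX ^ (1 / r) + IXh ^ (1 / r)) * D ^ (1 / p) * Λ⁻¹ := by
      ring
  _ = (C₁ + C₂ * ENNReal.ofReal Ap * (IX ^ (1 / r) + IXh ^ (1 / r)) * D ^ (1 / p))
        * ε ^ (1 / (q + 1)) := by
      rw [hΛqε, hεinv]
      ring
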